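/- Let g ≥ 1 and let σ ∈ A_{4g} be a permutation whose disjoint cycle decomposition consists of 2g+2 cycles of (odd) lengths 2n_i + 1, i = 1,…,2g+2, with Σ n_i = g − 1 (including fixed points as 1-cycles). Then there exist 3-cycles τ_1, …, τ_{2g} in A_{4g} and the fixed involution ℓ = (1 2)(3 4)⋯(4g−1 4g) such that σ = (A ℓ)², where A = τ_1 τ_2 ⋯ τ_{2g}. -/

import Mathlib

/-- The fixed fixed-point-free involution `ℓ = (1 2)(3 4)⋯(4g−1 4g)` of `{1, …, 4g}`,
realized on `Fin (4*g)` (0-indexed: it swaps `2j ↔ 2j+1`). -/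
def ell (g : ℕ) : Equiv.Perm (Fin (4 * g)) :=
  Function.Involutive.toPerm
    (fun k => if _ : k.val % 2 = 0 then ⟨k.val + 1, by omega⟩ else ⟨k.val - 1, by omega⟩)
    (by
      intro k
      dsimp only
      split_ifs with h1 h2 h2
      · exfalso; revert h2; dsimp only; omega
      · apply Fin.ext; dsimp only; omega
      · apply Fin.ext; dsimp only; revert h2; dsimp only; omega
      · exfalso; revert h2; dsimp only; omega)

open Equiv Equiv.Perm

section ThreeCycleList

variable {α : Type*} [Fintype α] [DecidableEq α]

private lemma card_helper2' {s s' : Finset α} {x b : α} (hx : x ∈ s) (hb : b ∈ s)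
    (hxb : x ≠ b) (h : ∀ y ∈ s', y ∈ s ∧ y ≠ x ∧ y ≠ b) : s'.card + 2 ≤ s.card := by
  have hsub : s' ⊆ (s.erase x).erase b := by
    intro y hy
    obtain ⟨h1, h2, h3⟩ := h y hy
    exact Finset.mem_erase.2 ⟨h3, Finset.mem_erase.2 ⟨h2, h1⟩⟩
  have h1 := Finset.card_le_card hsub
  have hbe : b ∈ s.erase x := Finset.mem_erase.2 ⟨Ne.symm hxb, hb⟩
  have h2 := Finset.card_erase_of_mem hbe
  have h3 := Finset.card_erase_of_mem hx
  have h4 : 0 < s.card := Finset.card_pos.2 ⟨x, hx⟩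
  have h5 : 0 < (s.erase x).card := Finset.card_pos.2 ⟨b, hbe⟩
  omega

private lemma card_helper4' {s s' : Finset α} {a b d e : α}
    (ha : a ∈ s) (hb : b ∈ s) (hd : d ∈ s) (he : e ∈ s)
    (hab : a ≠ b) (had : a ≠ d) (hae : a ≠ e) (hbd : b ≠ d) (hbe : b ≠ e) (hde : d ≠ e)
    (h : ∀ y ∈ s', y ∈ s ∧ y ≠ a ∧ y ≠ b ∧ y ≠ d ∧ y ≠ e) : s'.card + 4 ≤ s.card := by
  have hsub : s' ⊆ (((s.erase a).erase b).erase d).erase e := by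
    intro y hy
    obtain ⟨h1, h2, h3, h4, h5⟩ := h y hy
    exact Finset.mem_erase.2 ⟨h5, Finset.mem_erase.2 ⟨h4,
      Finset.mem_erase.2 ⟨h3, Finset.mem_erase.2 ⟨h2, h1⟩⟩⟩⟩
  have h1 := Finset.card_le_card hsub
  have hb1 : b ∈ s.erase a := Finset.mem_erase.2 ⟨Ne.symm hab, hb⟩
  have hd1 : d ∈ (s.erase a).erase b :=
    Finset.mem_erase.2 ⟨Ne.symm hbd, Finset.mem_erase.2 ⟨Ne.symm had, hd⟩⟩
  have he1 : e ∈ ((s.erase a).erase b).erase d :=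
    Finset.mem_erase.2 ⟨Ne.symm hde, Finset.mem_erase.2 ⟨Ne.symm hbe,
      Finset.mem_erase.2 ⟨Ne.symm hae, he⟩⟩⟩
  have c1 := Finset.card_erase_of_mem ha
  have c2 := Finset.card_erase_of_mem hb1
  have c3 := Finset.card_erase_of_mem hd1
  have c4 := Finset.card_erase_of_mem he1
  have p1 : 0 < s.card := Finset.card_pos.2 ⟨a, ha⟩
  have p2 : 0 < (s.erase a).card := Finset.card_pos.2 ⟨b, hb1⟩
  have p3 : 0 < ((s.erase a).erase b).card := Finset.card_pos.2 ⟨d, hd1⟩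
  have p4 : 0 < (((s.erase a).erase b).erase d).card := Finset.card_pos.2 ⟨e, he1⟩
  omega

/-- Every even permutation is a product of a list of 3-cycles of length
at most half the support size. -/
lemma exists_threeCycle_list' :
    ∀ (N : ℕ) (π : Perm α), π.support.card ≤ N → Perm.sign π = 1 →
      ∃ L : List (Perm α), (∀ τ ∈ L, Perm.IsThreeCycle τ) ∧ L.prod = π ∧
        2 * L.length ≤ π.support.card := by
  intro N
  induction N with
  | zero =>
    intro π hc hs
    have hπ : π = 1 := by rw [← Equiv.Perm.card_support_eq_zero]; omega
    exact ⟨[], by simp, by simp [hπ], by simp⟩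
  | succ N ih =>
    intro π hc hs
    by_cases h1 : π = 1
    · exact ⟨[], by simp, by simp [h1], by simp⟩
    by_cases hInv : ∀ x ∈ π.support, π (π x) = x
    · -- involution case
      obtain ⟨a, ha⟩ : π.support.Nonempty := by
        rw [Finset.nonempty_iff_ne_empty, Ne, Equiv.Perm.support_eq_empty_iff]; exact h1
      have hab : π a ≠ a := Equiv.Perm.mem_support.1 ha
      set b := π a with hbdef
      have hπb : π b = a := hInv a ha
      have hbs : b ∈ π.support := Equiv.Perm.mem_support.2 (by rw [hπb]; exact Ne.symm hab)
      have hane : a ≠ b := Ne.symm hab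
      have hex : ∃ d ∈ π.support, d ≠ a ∧ d ≠ b := by
        by_contra hcon
        push_neg at hcon
        have hπeq : π = Equiv.swap a b := by
          ext y
          by_cases hy : y ∈ π.support
          · rcases (em (y = a)) with h | h
            · rw [h, ← hbdef, Equiv.swap_apply_left]
            · rcases (em (y = b)) with h' | h'
              · rw [h', hπb, Equiv.swap_apply_right]
              · exact absurd (hcon y hy h) h'
          · have h0 : π y = y := Equiv.Perm.notMem_support.1 hy
            have hy1 : y ≠ a := fun h => hy (h ▸ ha)
            have hy2 : y ≠ b := fun h => hy (h ▸ hbs)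
            rw [h0, Equiv.swap_apply_of_ne_of_ne hy1 hy2]
        rw [hπeq, Equiv.Perm.sign_swap hane] at hs
        exact absurd hs (by decide)
      obtain ⟨d, hds, hda, hdb⟩ := hex
      have hdmoved : π d ≠ d := Equiv.Perm.mem_support.1 hds
      set e := π d with hedef
      have hπe : π e = d := hInv d hds
      have hdene : d ≠ e := Ne.symm hdmoved
      have hea : e ≠ a := by
        intro h
        have hbd : b = d := by rw [hbdef, ← h]; exact hπe
        exact hdb hbd.symm
      have heb : e ≠ b := by
        intro h
        apply hda
        have h2 := hπe
        rw [h, hπb] at h2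
        exact h2.symm
      have hes : e ∈ π.support := Equiv.Perm.mem_support.2 (by rw [hπe]; exact Ne.symm hdmoved)
      set τ₁ : Perm α := Equiv.swap a b * Equiv.swap a d with hτ₁def
      set τ₂ : Perm α := Equiv.swap a d * Equiv.swap d e with hτ₂def
      have ht1 : Perm.IsThreeCycle τ₁ :=
        Equiv.Perm.isThreeCycle_swap_mul_swap_same hane (Ne.symm hda) (Ne.symm hdb)
      have ht2 : Perm.IsThreeCycle τ₂ := by
        rw [hτ₂def, Equiv.swap_comm a d]
        exact Equiv.Perm.isThreeCycle_swap_mul_swap_same hda hdene (Ne.symm hea)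
      set π' : Perm α := (Equiv.swap a b * Equiv.swap d e)⁻¹ * π with hπ'def
      have hts : τ₁ * τ₂ = Equiv.swap a b * Equiv.swap d e := by
        rw [hτ₁def, hτ₂def]
        simp [mul_assoc, Equiv.swap_mul_self_mul]
      have hππ : (τ₁ * τ₂) * π' = π := by
        rw [hts, hπ'def, mul_inv_cancel_left]
      have happly : ∀ y, π' y = Equiv.swap d e (Equiv.swap a b (π y)) := by
        intro y
        simp [hπ'def, mul_inv_rev, Equiv.Perm.mul_apply]
      have hπ'a : π' a = a := by
        rw [happly, ← hbdef, Equiv.swap_apply_right,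
          Equiv.swap_apply_of_ne_of_ne (Ne.symm hda) (Ne.symm hea)]
      have hπ'b : π' b = b := by
        rw [happly, hπb, Equiv.swap_apply_left,
          Equiv.swap_apply_of_ne_of_ne (Ne.symm hdb) (Ne.symm heb)]
      have hπ'd : π' d = d := by
        rw [happly, ← hedef, Equiv.swap_apply_of_ne_of_ne hea heb, Equiv.swap_apply_right]
      have hπ'e : π' e = e := by
        rw [happly, hπe, Equiv.swap_apply_of_ne_of_ne hda hdb, Equiv.swap_apply_left]
      have hsub : ∀ y ∈ π'.support, y ∈ π.support ∧ y ≠ a ∧ y ≠ b ∧ y ≠ d ∧ y ≠ e := by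
        intro y hy
        have hy' : π' y ≠ y := Equiv.Perm.mem_support.1 hy
        refine ⟨?_, fun h => hy' (h ▸ hπ'a), fun h => hy' (h ▸ hπ'b),
          fun h => hy' (h ▸ hπ'd), fun h => hy' (h ▸ hπ'e)⟩
        by_contra hns
        have hfix : π y = y := Equiv.Perm.notMem_support.1 hns
        have hya : y ≠ a := fun h => hns (h ▸ ha)
        have hyb : y ≠ b := fun h => hns (h ▸ hbs)
        have hyd : y ≠ d := fun h => hns (h ▸ hds)
        have hye : y ≠ e := fun h => hns (h ▸ hes)
        apply hy'
        rw [happly, hfix, Equiv.swap_apply_of_ne_of_ne hya hyb,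
          Equiv.swap_apply_of_ne_of_ne hyd hye]
      have hsπ' : Perm.sign π' = 1 := by
        rw [hπ'def, map_mul, map_inv, map_mul,
          Equiv.Perm.sign_swap hane, Equiv.Perm.sign_swap hdene, hs]
        decide
      have hcard4 := card_helper4' ha hbs hds hes hane (Ne.symm hda) (Ne.symm hea)
        (Ne.symm hdb) (Ne.symm heb) hdene hsub
      obtain ⟨L, hL3, hLp, hLl⟩ := ih π' (by omega) hsπ'
      refine ⟨τ₁ :: τ₂ :: L, ?_, ?_, ?_⟩
      · intro τ hτ
        simp only [List.mem_cons] at hτ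
        rcases hτ with rfl | rfl | hτ
        · exact ht1
        · exact ht2
        · exact hL3 τ hτ
      · rw [List.prod_cons, List.prod_cons, hLp, ← mul_assoc, hππ]
      · simp only [List.length_cons]
        omega
    · push_neg at hInv
      obtain ⟨x, hx, hxx⟩ := hInv
      have hbx : π x ≠ x := Equiv.Perm.mem_support.1 hx
      set b := π x with hbdef
      set c := π b with hcdef
      have hbs : b ∈ π.support := by
        rw [Equiv.Perm.mem_support]
        intro h
        exact hbx (π.injective (by rw [h, ← hbdef]))
      have hbc : b ≠ c := Ne.symm (Equiv.Perm.mem_support.1 hbs)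
      have hcx : c ≠ x := hxx
      have hcs : c ∈ π.support := by
        rw [Equiv.Perm.mem_support]
        intro h
        exact hbc (π.injective (by rw [h, ← hcdef]))
      set τ : Perm α := Equiv.swap x c * Equiv.swap x b with hτdef
      have ht : Perm.IsThreeCycle τ :=
        Equiv.Perm.isThreeCycle_swap_mul_swap_same (Ne.symm hcx) (Ne.symm hbx) (Ne.symm hbc)
      set π' : Perm α := τ⁻¹ * π with hπ'def
      have hππ : τ * π' = π := by rw [hπ'def, mul_inv_cancel_left]
      have happly : ∀ y, π' y = Equiv.swap x b (Equiv.swap x c (π y)) := by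
        intro y
        simp [hπ'def, hτdef, mul_inv_rev, Equiv.Perm.mul_apply]
      have hπ'x : π' x = x := by
        rw [happly, Equiv.swap_apply_of_ne_of_ne hbx hbc, Equiv.swap_apply_right]
      have hπ'b : π' b = b := by
        rw [happly, Equiv.swap_apply_right, Equiv.swap_apply_left]
      have hsub : ∀ y ∈ π'.support, y ∈ π.support ∧ y ≠ x ∧ y ≠ b := by
        intro y hy
        have hy' : π' y ≠ y := Equiv.Perm.mem_support.1 hy
        refine ⟨?_, fun h => hy' (h ▸ hπ'x), fun h => hy' (h ▸ hπ'b)⟩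
        by_contra hns
        have hfix : π y = y := Equiv.Perm.notMem_support.1 hns
        have hyx : y ≠ x := fun h => hns (h ▸ hx)
        have hyb : y ≠ b := fun h => hns (h ▸ hbs)
        have hyc : y ≠ c := fun h => hns (h ▸ hcs)
        apply hy'
        rw [happly, hfix, Equiv.swap_apply_of_ne_of_ne hyx hyc,
          Equiv.swap_apply_of_ne_of_ne hyx hyb]
      have hsπ' : Perm.sign π' = 1 := by
        rw [hπ'def, map_mul, map_inv, ht.sign, hs]
        decide
      have hcard2 := card_helper2' hx hbs (Ne.symm hbx) hsub
      obtain ⟨L, hL3, hLp, hLl⟩ := ih π' (by omega) hsπ'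
      refine ⟨τ :: L, ?_, ?_, ?_⟩
      · intro τ' hτ'
        simp only [List.mem_cons] at hτ'
        rcases hτ' with rfl | hτ'
        · exact ht
        · exact hL3 τ' hτ'
      · rw [List.prod_cons, hLp, hππ]
      · simp only [List.length_cons]
        omega

/-- A nonempty list of 3-cycles can be padded to any longer length with the same product. -/
lemma pad_threeCycle_list' (k : ℕ) :
    ∀ L : List (Perm α), L ≠ [] → (∀ τ ∈ L, Perm.IsThreeCycle τ) → L.length ≤ k →
      ∃ L' : List (Perm α), (∀ τ ∈ L', Perm.IsThreeCycle τ) ∧ L'.prod = L.prod ∧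
        L'.length = k := by
  induction k with
  | zero =>
    intro L hne _ hl
    exact absurd (List.length_eq_zero_iff.1 (Nat.le_zero.1 hl)) hne
  | succ k ih =>
    intro L hne h3 hl
    rcases eq_or_lt_of_le hl with heq | hlt
    · exact ⟨L, h3, rfl, heq⟩
    · obtain ⟨L', h3', hp', hl'⟩ := ih L hne h3 (by omega)
      match L', h3', hp', hl' with
      | [], _, _, hl' =>
        exfalso
        have := List.length_pos_iff.2 hne
        simp at hl'
        omega
      | τ :: t, h3', hp', hl' =>
        have hτ : Perm.IsThreeCycle τ := h3' τ (by simp)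
        have ht3 : τ ^ 3 = 1 := by
          rw [← hτ.orderOf]; exact pow_orderOf_eq_one τ
        have hinv2 : τ⁻¹ * τ⁻¹ = τ := by
          have h4 : τ ^ 4 = τ := by
            rw [show (4 : ℕ) = 3 + 1 from rfl, pow_succ, ht3, one_mul]
          calc τ⁻¹ * τ⁻¹ = (τ ^ 3)⁻¹ * τ⁻¹ * (τ ^ 3) * τ⁻¹ * (τ^3) := by
                rw [ht3]; group
            _ = τ ^ 4 * (τ^3)⁻¹ := by group
            _ = τ := by rw [h4, ht3]; group
        refine ⟨τ⁻¹ :: τ⁻¹ :: t, ?_, ?_, ?_⟩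
        · intro τ' hτ'
          simp only [List.mem_cons] at hτ'
          rcases hτ' with rfl | rfl | hτ'
          · exact hτ.inv
          · exact hτ.inv
          · exact h3' τ' (List.mem_cons_of_mem _ hτ')
        · rw [← hp', List.prod_cons, List.prod_cons, List.prod_cons, ← mul_assoc, hinv2]
        · simp only [List.length_cons] at hl' ⊢
          omega

end ThreeCycleList

section EllLemmas

/-- the list of transpositions building up `ell`. -/
def swapL (g n : ℕ) : List (Equiv.Perm (Fin (4 * g))) :=
  (List.range n).map fun j =>
    if h : 2 * j + 1 < 4 * g then Equiv.swap ⟨2 * j, by omega⟩ ⟨2 * j + 1, h⟩ else 1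

lemma swapL_succ (g n : ℕ) : swapL g (n + 1) = swapL g n ++
    [if h : 2 * n + 1 < 4 * g then Equiv.swap ⟨2 * n, by omega⟩ ⟨2 * n + 1, h⟩
      else (1 : Equiv.Perm (Fin (4 * g)))] := by
  simp [swapL, List.range_succ]

lemma swapL_apply (g : ℕ) : ∀ n, n ≤ 2 * g → ∀ k : Fin (4 * g),
    (((swapL g n).prod) k).val =
      if k.val < 2 * n then (if k.val % 2 = 0 then k.val + 1 else k.val - 1) else k.val := by
  intro n
  induction n with
  | zero => intro _ k; simp [swapL]
  | succ n ih =>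
    intro hn k
    have h2n : 2 * n + 1 < 4 * g := by omega
    rw [swapL_succ, List.prod_append, List.prod_singleton, Equiv.Perm.mul_apply, dif_pos h2n]
    by_cases hk1 : k.val = 2 * n
    · have hk : k = ⟨2 * n, by omega⟩ := Fin.ext hk1
      rw [hk, Equiv.swap_apply_left, ih (by omega)]
      simp only [Fin.val_mk]
      split_ifs <;> omega
    · by_cases hk2 : k.val = 2 * n + 1
      · have hk : k = ⟨2 * n + 1, by omega⟩ := Fin.ext hk2
        rw [hk, Equiv.swap_apply_right, ih (by omega)]
        simp only [Fin.val_mk]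
        split_ifs <;> omega
      · rw [Equiv.swap_apply_of_ne_of_ne (Fin.ne_of_val_ne hk1) (Fin.ne_of_val_ne hk2),
          ih (by omega)]
        split_ifs <;> omega

lemma ell_eq_swapL (g : ℕ) : ell g = (swapL g (2 * g)).prod := by
  ext k
  rw [swapL_apply g (2 * g) le_rfl k]
  have hk : k.val < 2 * (2 * g) := by omega
  rw [if_pos hk]
  simp only [ell, Function.Involutive.coe_toPerm]
  split_ifs with h
  · exact congrArg Fin.val (dif_pos h)
  · exact congrArg Fin.val (dif_neg h)

lemma sign_swapL (g : ℕ) : ∀ n, n ≤ 2 * g →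
    Equiv.Perm.sign ((swapL g n).prod) = (-1 : ℤˣ) ^ n := by
  intro n
  induction n with
  | zero => intro _; simp [swapL]
  | succ n ih =>
    intro hn
    have h2n : 2 * n + 1 < 4 * g := by omega
    rw [swapL_succ, List.prod_append, List.prod_singleton, map_mul, ih (by omega), dif_pos h2n,
      Equiv.Perm.sign_swap (Fin.ne_of_val_ne (show 2 * n ≠ 2 * n + 1 by omega)), pow_succ]

lemma sign_ell (g : ℕ) : Equiv.Perm.sign (ell g) = 1 := by
  rw [ell_eq_swapL, sign_swapL g (2 * g) le_rfl]
  exact Even.neg_one_pow ⟨g, by ring⟩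

lemma ell_inv (g : ℕ) : (ell g)⁻¹ = ell g := by
  show (ell g).symm = ell g
  exact Function.Involutive.toPerm_symm _

lemma ell_sq (g : ℕ) : ell g * ell g = 1 := by
  calc ell g * ell g = ell g * (ell g)⁻¹ := by rw [ell_inv]
    _ = 1 := by group

end EllLemmas

lemma odd_multiset_lcm (s : Multiset ℕ) (h : ∀ x ∈ s, Odd x) : Odd s.lcm := by
  induction s using Multiset.induction with
  | empty => simp
  | cons a s ih =>
    rw [Multiset.lcm_cons]
    have ha := h a (Multiset.mem_cons_self a s)
    have hs := ih (fun x hx => h x (Multiset.mem_cons_of_mem hx))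
    have hnd : ¬ 2 ∣ Nat.lcm a s.lcm := by
      intro hdvd
      have h2 : (2 : ℕ) ∣ a * s.lcm := hdvd.trans (Nat.lcm_dvd_mul a s.lcm)
      rcases (Nat.prime_two.dvd_mul).1 h2 with h' | h'
      · rw [Nat.odd_iff] at ha; omega
      · rw [Nat.odd_iff] at hs; omega
    rw [lcm_eq_nat_lcm, Nat.odd_iff]
    omega

/-- Let `g ≥ 1` and `σ ∈ A_{4g}` a permutation whose disjoint cycle decomposition
consists of `2g+2` cycles of odd lengths `2nᵢ+1` with `Σ nᵢ = g−1` (fixed points counted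
as 1-cycles).  Then there are `2g` three-cycles `τ₁, …, τ_{2g}` such that
`σ = (A ℓ)²` with `A = τ₁ ⋯ τ_{2g}` and `ℓ = (1 2)(3 4)⋯(4g−1 4g)`. -/
theorem stmt_4 (g : ℕ) (hg : 1 ≤ g) (n : Fin (2 * g + 2) → ℕ)
    (hsum : ∑ i, n i = g - 1) (σ : Equiv.Perm (Fin (4 * g)))
    (hσ : σ ∈ alternatingGroup (Fin (4 * g)))
    (hcyc : σ.cycleType = (Finset.univ.val.map fun i => 2 * n i + 1).filter fun k => 1 < k) :
    ∃ τ : Fin (2 * g) → Equiv.Perm (Fin (4 * g)),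
      (∀ i, (τ i).IsThreeCycle) ∧ σ = ((List.ofFn τ).prod * ell g) ^ 2 := by
  classical
  have hoddmem : ∀ x ∈ σ.cycleType, Odd x := by
    intro x hx
    rw [hcyc] at hx
    obtain ⟨i, _, hi⟩ := Multiset.mem_map.1 (Multiset.mem_filter.1 hx).1
    exact hi ▸ ⟨n i, by ring⟩
  have hodd : Odd (orderOf σ) := by
    rw [← Equiv.Perm.lcm_cycleType]
    exact odd_multiset_lcm _ hoddmem
  obtain ⟨m, hm⟩ := hodd
  set X : Equiv.Perm (Fin (4 * g)) := σ ^ (m + 1) with hXdef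
  have hX2 : X ^ 2 = σ := by
    rw [hXdef, ← pow_mul]
    have hmul : (m + 1) * 2 = orderOf σ + 1 := by omega
    rw [hmul, pow_succ, pow_orderOf_eq_one, one_mul]
  have hsσ : Equiv.Perm.sign σ = 1 := Equiv.Perm.mem_alternatingGroup.1 hσ
  have hsX : Equiv.Perm.sign X = 1 := by rw [hXdef, map_pow, hsσ, one_pow]
  have hsA : Equiv.Perm.sign (X * ell g) = 1 := by
    rw [map_mul, hsX, sign_ell, mul_one]
  obtain ⟨L, hL3, hLp, hLlen⟩ :=
    exists_threeCycle_list' (X * ell g).support.card (X * ell g) le_rfl hsA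
  have hcard : (X * ell g).support.card ≤ 4 * g := by
    calc (X * ell g).support.card ≤ Finset.univ.card := Finset.card_le_univ _
      _ = 4 * g := by simp
  have hlen : L.length ≤ 2 * g := by omega
  -- get a nonempty list of 3-cycles of length ≤ 2g with product X * ell g
  have hbase : ∃ M : List (Equiv.Perm (Fin (4 * g))), M ≠ [] ∧
      (∀ τ ∈ M, Equiv.Perm.IsThreeCycle τ) ∧ M.prod = X * ell g ∧ M.length ≤ 2 * g := by
    match L, hL3, hLp, hLlen with
    | [], _, hLp, _ =>
      have h0 : (⟨0, by omega⟩ : Fin (4 * g)) ≠ ⟨1, by omega⟩ :=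
        Fin.ne_of_val_ne (show (0 : ℕ) ≠ 1 by omega)
      have h1 : (⟨0, by omega⟩ : Fin (4 * g)) ≠ ⟨2, by omega⟩ :=
        Fin.ne_of_val_ne (show (0 : ℕ) ≠ 2 by omega)
      have h2 : (⟨1, by omega⟩ : Fin (4 * g)) ≠ ⟨2, by omega⟩ :=
        Fin.ne_of_val_ne (show (1 : ℕ) ≠ 2 by omega)
      set τ₀ : Equiv.Perm (Fin (4 * g)) :=
        Equiv.swap ⟨0, by omega⟩ ⟨1, by omega⟩ * Equiv.swap ⟨0, by omega⟩ ⟨2, by omega⟩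
        with hτ₀def
      have ht₀ : Equiv.Perm.IsThreeCycle τ₀ :=
        Equiv.Perm.isThreeCycle_swap_mul_swap_same h0 h1 h2
      refine ⟨[τ₀, τ₀⁻¹], by simp, ?_, ?_, by simp; omega⟩
      · intro τ hτ
        simp only [List.mem_cons, List.not_mem_nil, or_false] at hτ
        rcases hτ with rfl | rfl
        · exact ht₀
        · exact ht₀.inv
      · rw [← hLp]
        simp
    | τ :: t, hL3, hLp, hLlen =>
      exact ⟨τ :: t, by simp, hL3, hLp, by omega⟩
  obtain ⟨M, hMne, hM3, hMp, hMlen⟩ := hbase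
  obtain ⟨L', h3', hp', hl'⟩ := pad_threeCycle_list' (2 * g) M hMne hM3 hMlen
  rw [hMp] at hp'
  refine ⟨fun i => L'.get (Fin.cast hl'.symm i), ?_, ?_⟩
  · intro i
    exact h3' _ (L'.get_mem _)
  · have hofn : List.ofFn (fun i : Fin (2 * g) => L'.get (Fin.cast hl'.symm i)) = L' := by
      apply List.ext_getElem
      · simp [hl']
      · intro i hi1 hi2
        simp [List.getElem_ofFn, List.get_eq_getElem]
    rw [hofn, hp', mul_assoc, ell_sq, mul_one, hX2]
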